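/- Let n ≥ 1, let β : Fin n → ℝ satisfy β_j ∈ (0, 2π) for all j and Σ_j β_j = 2π, let σ be the cyclic permutation j ↦ j+1 of Fin n, let P_σ be its permutation matrix and Q the diagonal matrix with entries exp(i·β_j/2). Then det(1 − P_σ · Q) = 2. -/

import Mathlib

open Fin.NatCast

lemma perm_entry_helper {n : ℕ} (σ : Equiv.Perm (Fin n)) (q : Fin n → ℂ) (i j : Fin n) :
    ((1 : Matrix (Fin n) (Fin n) ℂ) - σ.permMatrix ℂ * Matrix.diagonal q) i j
      = (if i = j then 1 else 0) - (if σ i = j then 1 else 0) * q j := by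
  simp [Matrix.sub_apply, Matrix.one_apply, Matrix.mul_diagonal,
    Equiv.Perm.permMatrix, PEquiv.toMatrix_apply, Equiv.toPEquiv_apply]

lemma phases_prod_helper {n : ℕ} (β : Fin n → ℝ) (hsum : ∑ j, β j = 2 * Real.pi) :
    ∏ j, Complex.exp (Complex.I * (β j) / 2) = -1 := by
  rw [← Complex.exp_sum]
  have h1 : ∑ j, Complex.I * (β j : ℂ) / 2 = (∑ j, (β j : ℂ)) * (Complex.I / 2) := by
    rw [Finset.sum_mul]
    exact Finset.sum_congr rfl fun j _ => by ring
  have h2 : (∑ j, (β j : ℂ)) = ((2 : ℝ) * Real.pi : ℝ) := by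
    rw [← Complex.ofReal_sum, hsum]
  rw [h1, h2]
  push_cast
  rw [show (2 : ℂ) * Real.pi * (Complex.I / 2) = Real.pi * Complex.I by ring,
    Complex.exp_pi_mul_I]

/-- If `β : Fin n → ℝ` takes values in `(0, 2π)` and sums to `2π`, and `σ` is
the cyclic permutation `j ↦ j + 1` of `Fin n`, then
`det(1 - P_σ · diag(exp(i·β_j/2))) = 2`. -/
theorem det_one_sub_cyclic_perm_mul_phases (n : ℕ) (hn : 1 ≤ n) (β : Fin n → ℝ)
    (hβ : ∀ j, β j ∈ Set.Ioo 0 (2 * Real.pi)) (hsum : ∑ j, β j = 2 * Real.pi) :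
    Matrix.det ((1 : Matrix (Fin n) (Fin n) ℂ) - (finRotate n).permMatrix ℂ *
        Matrix.diagonal (fun j => Complex.exp (Complex.I * (β j) / 2))) = 2 := by
  match n, hn, β, hβ, hsum with
  | 1, _, β, hβ, hsum =>
    have hβ0 : β 0 = 2 * Real.pi := by
      rw [← hsum, Fin.sum_univ_one]
    rw [Matrix.det_fin_one, perm_entry_helper]
    have h1 : finRotate 1 0 = 0 := Subsingleton.elim _ _
    rw [h1, if_pos rfl, one_mul]
    have h2 : Complex.I * (β 0 : ℂ) / 2 = Real.pi * Complex.I := by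
      rw [hβ0]; push_cast; ring
    rw [h2, Complex.exp_pi_mul_I]
    norm_num
  | (m + 2), _, β, hβ, hsum =>
    set q : Fin (m + 2) → ℂ := fun j => Complex.exp (Complex.I * (β j) / 2) with hq
    have hprod : ∏ j, q j = -1 := phases_prod_helper β hsum
    set σ : Equiv.Perm (Fin (m + 2)) := finRotate (m + 2) with hσ
    set c : Equiv.Perm (Fin (m + 2)) := σ⁻¹ with hc
    have hσapp : ∀ j : Fin (m + 2), σ j = j + 1 := fun j => finRotate_succ_apply j
    have hone : (1 : Fin (m + 2)) ≠ 0 := by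
      simp [Fin.ext_iff]
    have hσne : ∀ j : Fin (m + 2), σ j ≠ j := by
      intro j h
      rw [hσapp] at h
      exact hone (by simpa using h)
    have hcapp : ∀ j : Fin (m + 2), c j = j - 1 := by
      intro j
      rw [hc, Equiv.Perm.inv_def, Equiv.symm_apply_eq, hσapp, sub_add_cancel]
    have hcne : ∀ j : Fin (m + 2), c j ≠ j := by
      intro j h
      rw [hcapp] at h
      exact hone (sub_eq_self.mp h)
    have h1c : (1 : Equiv.Perm (Fin (m + 2))) ≠ c := by
      intro h
      exact hcne 0 (by rw [← h]; rfl)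
    have hclass : ∀ τ : Equiv.Perm (Fin (m + 2)), τ ≠ 1 → τ ≠ c →
        ∃ j, τ j ≠ j ∧ σ (τ j) ≠ j := by
      intro τ hτ1 hτc
      by_contra h
      push_neg at h
      have hor : ∀ j, τ j = j ∨ τ j = j - 1 := by
        intro j
        rcases eq_or_ne (τ j) j with h' | h'
        · exact Or.inl h'
        · have := h j h'
          rw [hσapp] at this
          exact Or.inr (by rw [eq_sub_iff_add_eq, this])
      obtain ⟨j₀, hj₀⟩ : ∃ j₀, τ j₀ ≠ j₀ := by
        by_contra hall
        push_neg at hall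
        exact hτ1 (Equiv.ext fun j => hall j)
      have hj₀' : τ j₀ = j₀ - 1 := (hor j₀).resolve_left hj₀
      have hstep : ∀ j : Fin (m + 2), τ j = j - 1 → τ (j - 1) = j - 1 - 1 := by
        intro j hj
        refine (hor (j - 1)).resolve_left ?_
        intro h'
        have hne : j - 1 ≠ j := fun h'' => hone (sub_eq_self.mp h'')
        exact hne (τ.injective (by rw [h', hj]))
      have hall : ∀ k : ℕ, τ (j₀ - (k : Fin (m + 2))) = j₀ - (k : Fin (m + 2)) - 1 := by
        intro k
        induction k with
        | zero => simpa using hj₀'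
        | succ k ih =>
          have hcast : j₀ - ((k + 1 : ℕ) : Fin (m + 2)) = j₀ - (k : Fin (m + 2)) - 1 := by
            push_cast; rw [sub_sub]
          rw [hcast]
          exact hstep _ ih
      apply hτc
      ext j
      have hj : j₀ - (((j₀ - j : Fin (m + 2)) : ℕ) : Fin (m + 2)) = j := by
        rw [Fin.cast_val_eq_self, sub_sub_cancel]
      rw [hcapp j, ← hj, hall]
    rw [Matrix.det_apply]
    rw [Finset.sum_eq_add_of_mem (1 : Equiv.Perm (Fin (m + 2))) c (Finset.mem_univ _)
      (Finset.mem_univ _) h1c ?_]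
    · have hterm1 : (Equiv.Perm.sign (1 : Equiv.Perm (Fin (m + 2)))) •
          ∏ i, ((1 : Matrix (Fin (m + 2)) (Fin (m + 2)) ℂ) - σ.permMatrix ℂ * Matrix.diagonal q)
            ((1 : Equiv.Perm (Fin (m + 2))) i) i = 1 := by
        rw [Equiv.Perm.sign_one, one_smul]
        rw [Finset.prod_congr rfl fun i _ => by
          rw [Equiv.Perm.one_apply, perm_entry_helper, if_pos rfl, if_neg (hσne i),
            zero_mul, sub_zero]]
        rw [Finset.prod_const, one_pow]
      have htermc : (Equiv.Perm.sign c) •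
          ∏ i, ((1 : Matrix (Fin (m + 2)) (Fin (m + 2)) ℂ) - σ.permMatrix ℂ * Matrix.diagonal q)
            (c i) i = 1 := by
        have hsign : Equiv.Perm.sign c = (-1) ^ (m + 1) := by
          rw [hc, Equiv.Perm.sign_inv, hσ, sign_finRotate]; rfl
        have hpr : ∏ i, ((1 : Matrix (Fin (m + 2)) (Fin (m + 2)) ℂ) - σ.permMatrix ℂ *
            Matrix.diagonal q) (c i) i = (-1) ^ (m + 2) * ∏ i, q i := by
          rw [Finset.prod_congr rfl fun i _ => by
            rw [perm_entry_helper, if_neg (hcne i),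
              if_pos (by rw [hc]; exact σ.apply_symm_apply i), one_mul, zero_sub]]
          rw [show (fun i => -q i) = (fun i => -1 * q i) by funext i; ring]
          rw [Finset.prod_mul_distrib, Finset.prod_const]
          simp
        rw [hpr, hprod, hsign, Units.smul_def, zsmul_eq_mul]
        push_cast
        have key : ((-1 : ℂ)) ^ (m + 1) * ((-1 : ℂ) ^ (m + 2) * -1) = 1 := by
          have h3 : ((-1 : ℂ)) ^ (m + 2) * -1 = (-1 : ℂ) ^ (m + 3) := by
            rw [pow_succ _ (m + 2)]
          rw [h3, ← pow_add]
          have h4 : m + 1 + (m + 3) = 2 * (m + 2) := by ring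
          rw [h4, pow_mul]
          norm_num
        linear_combination key
      rw [hterm1, htermc]
      norm_num
    · intro τ _ hτ
      obtain ⟨j, hj1, hj2⟩ := hclass τ hτ.1 hτ.2
      have hz : ((1 : Matrix (Fin (m + 2)) (Fin (m + 2)) ℂ) - σ.permMatrix ℂ * Matrix.diagonal q)
          (τ j) j = 0 := by
        rw [perm_entry_helper, if_neg hj1, if_neg hj2, zero_mul, sub_zero]
      have hz' : ∏ i, ((1 : Matrix (Fin (m + 2)) (Fin (m + 2)) ℂ) - σ.permMatrix ℂ *
          Matrix.diagonal q) (τ i) i = 0 := Finset.prod_eq_zero (Finset.mem_univ j) hz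
      rw [hz', smul_zero]
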